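/- Greedy guarantee with a fixed element: let $f : 2^{[n]} \to \mathbb{R}$ be non-negative, monotone non-decreasing, and submodular. Let $S_0 = \emptyset$ and, for $\ell = 1,\dots,k-1$, let $S_\ell = S_{\ell-1} \cup \{i_\ell\}$ where $i_\ell$ maximizes $f(S_{\ell-1} \cup \{i\}) - f(S_{\ell-1})$ over $i \in [n]$. Then $f(S_{k-1}) \ge \left(1 - \left(1-\frac{1}{k}\right)^{k-1}\right) \cdot \max_{|T| \le k} f(T)$. -/

import Mathlib

theorem stmt_5 (n k : ℕ) (hk : 2 ≤ k) (hkn : k ≤ n)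
    (f : Finset (Fin n) → ℝ)
    (hnonneg : ∀ S, 0 ≤ f S)
    (hmono : ∀ S T, S ⊆ T → f S ≤ f T)
    (hsub : ∀ S T : Finset (Fin n), ∀ j, S ⊆ T → j ∉ T →
      f (insert j T) - f T ≤ f (insert j S) - f S)
    (S : ℕ → Finset (Fin n))
    (hS0 : S 0 = ∅)
    (hgreedy : ∀ ℓ < k - 1, ∃ i : Fin n,
      S (ℓ + 1) = insert i (S ℓ) ∧
      ∀ j : Fin n, f (insert j (S ℓ)) - f (S ℓ) ≤ f (insert i (S ℓ)) - f (S ℓ)) :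
    ∀ T : Finset (Fin n), T.card ≤ k →
      (1 - (1 - 1 / (k : ℝ)) ^ (k - 1)) * f T ≤ f (S (k - 1)) := by
  intro T hT
  have hKpos : (0:ℝ) < (k:ℝ) := by
    have : 0 < k := by omega
    exact_mod_cast this
  -- submodularity for arbitrary j (also j ∈ T)
  have hsub' : ∀ B C : Finset (Fin n), ∀ j, B ⊆ C →
      f (insert j C) - f C ≤ f (insert j B) - f B := by
    intro B C j hBC
    by_cases hj : j ∈ C
    · rw [Finset.insert_eq_self.mpr hj]
      have h1 : f B ≤ f (insert j B) := hmono _ _ (Finset.subset_insert _ _)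
      linarith
    · exact hsub B C j hBC hj
  -- subadditivity of marginals
  have key : ∀ (A B : Finset (Fin n)),
      f (B ∪ A) ≤ f B + ∑ j ∈ A, (f (insert j B) - f B) := by
    intro A
    induction A using Finset.induction_on with
    | empty => intro B; simp
    | insert a A' ha ih =>
      intro B
      rw [Finset.sum_insert ha]
      have h1 : f (B ∪ insert a A') ≤ f (insert a (B ∪ A')) := by
        apply hmono
        intro x hx
        simp only [Finset.mem_union, Finset.mem_insert] at hx ⊢
        tauto
      have h2 : f (insert a (B ∪ A')) - f (B ∪ A') ≤ f (insert a B) - f B :=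
        hsub' B (B ∪ A') a Finset.subset_union_left
      have h3 := ih B
      linarith
  -- per-step inequality
  have step : ∀ ℓ < k - 1, f T - f (S ℓ) ≤ (k:ℝ) * (f (S (ℓ+1)) - f (S ℓ)) := by
    intro ℓ hℓ
    obtain ⟨i, hSi, hmax⟩ := hgreedy ℓ hℓ
    have h1 : f T ≤ f (S ℓ ∪ T) := hmono _ _ Finset.subset_union_right
    have h2 := key T (S ℓ)
    have h3 : ∑ j ∈ T, (f (insert j (S ℓ)) - f (S ℓ)) ≤
        (T.card : ℝ) * (f (S (ℓ+1)) - f (S ℓ)) := by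
      rw [hSi]
      calc ∑ j ∈ T, (f (insert j (S ℓ)) - f (S ℓ))
          ≤ ∑ _j ∈ T, (f (insert i (S ℓ)) - f (S ℓ)) :=
            Finset.sum_le_sum fun j _ => hmax j
        _ = (T.card : ℝ) * (f (insert i (S ℓ)) - f (S ℓ)) := by
            rw [Finset.sum_const, nsmul_eq_mul]
    have hgain : 0 ≤ f (S (ℓ+1)) - f (S ℓ) := by
      rw [hSi]
      have := hmono (S ℓ) (insert i (S ℓ)) (Finset.subset_insert _ _)
      linarith
    have h4 : (T.card : ℝ) * (f (S (ℓ+1)) - f (S ℓ)) ≤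
        (k:ℝ) * (f (S (ℓ+1)) - f (S ℓ)) := by
      apply mul_le_mul_of_nonneg_right _ hgain
      exact_mod_cast hT
    linarith
  -- main induction
  have main : ∀ ℓ ≤ k - 1, f T - f (S ℓ) ≤ (1 - 1/(k:ℝ))^ℓ * f T := by
    intro ℓ
    induction ℓ with
    | zero =>
      intro _
      rw [hS0]
      have := hnonneg (∅ : Finset (Fin n))
      simp only [pow_zero, one_mul]
      linarith
    | succ m ih =>
      intro hm
      have hmlt : m < k - 1 := by omega
      have ih' := ih (by omega)
      have hstep := step m hmlt
      have hq : 0 ≤ 1 - 1/(k:ℝ) := by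
        have hk1 : (1:ℝ) ≤ (k:ℝ) := by exact_mod_cast (by omega : 1 ≤ k)
        have : 1/(k:ℝ) ≤ 1 := by
          rw [div_le_one hKpos]; exact hk1
        linarith
      have h1 : f T - f (S (m+1)) ≤ (1 - 1/(k:ℝ)) * (f T - f (S m)) := by
        have : (1/(k:ℝ)) * (f T - f (S m)) ≤ f (S (m+1)) - f (S m) := by
          rw [div_mul_eq_mul_div, div_le_iff₀ hKpos]
          linarith [hstep]
        ring_nf
        ring_nf at this
        nlinarith [this]
      calc f T - f (S (m+1)) ≤ (1 - 1/(k:ℝ)) * (f T - f (S m)) := h1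
        _ ≤ (1 - 1/(k:ℝ)) * ((1 - 1/(k:ℝ))^m * f T) :=
            mul_le_mul_of_nonneg_left ih' hq
        _ = (1 - 1/(k:ℝ))^(m+1) * f T := by ring
  have := main (k-1) le_rfl
  linarith
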